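/- Let G be a weighted graph on n vertices with all degrees positive, and let λ̄ = max{|1 − λ_1|, |1 − λ_{n−1}|}. For any subsets X, Y of V, |w(X,Y) − vol(X)·vol(Y)/vol(G)| ≤ λ̄ · √(vol(X)·vol(Y)·vol(X̄)·vol(Ȳ)) / vol(G), where w(X,Y) = Σ_{x∈X} Σ_{y∈Y} w(x,y). -/

import Mathlib

open Matrix Polynomial

noncomputable section

/-- The degree of a vertex in a weighted graph with weight function `w`. -/
def wdeg {V : Type*} [Fintype V] (w : V → V → ℝ) (x : V) : ℝ := ∑ y, w x y

/-- The diagonal matrix `T^{-1/2}` of a weighted graph. -/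
def invSqrtT {V : Type*} [Fintype V] [DecidableEq V] (w : V → V → ℝ) : Matrix V V ℝ :=
  Matrix.diagonal fun x => (Real.sqrt (wdeg w x))⁻¹

/-- The (normalized) Laplacian `I - T^{-1/2} A T^{-1/2}` of a weighted graph. -/
def wLap {V : Type*} [Fintype V] [DecidableEq V] (w : V → V → ℝ) : Matrix V V ℝ :=
  1 - invSqrtT w * Matrix.of w * invSqrtT w

/-- The volume of a set of vertices of a weighted graph. -/
def wvol {V : Type*} [Fintype V] (w : V → V → ℝ) (X : Finset V) : ℝ := ∑ x ∈ X, wdeg w x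

/-- `μ` lists the eigenvalues of the square matrix `M` (with multiplicity)
in non-decreasing order. -/
def IsEigenSeq {m : Type*} [Fintype m] [DecidableEq m] (M : Matrix m m ℝ) {n : ℕ}
    (μ : Fin n → ℝ) : Prop :=
  Monotone μ ∧ M.charpoly = ∏ i, (X - C (μ i))

/- ===== auxiliary lemmas ===== -/

lemma emx_eval_charpoly {V : Type*} [Fintype V] [DecidableEq V] (A : Matrix V V ℝ) (t : ℝ) :
    A.charpoly.eval t = (t • (1 : Matrix V V ℝ) - A).det := by
  rw [Matrix.charpoly, eval_det, Matrix.matPolyEquiv_charmatrix]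
  rw [eval_sub, eval_X, eval_C]
  congr 1
  simp [Matrix.scalar, Matrix.smul_one_eq_diagonal]

lemma emx_det_prod {V : Type*} [Fintype V] [DecidableEq V]
    (A : Matrix V V ℝ) (hA : A.IsHermitian) (t : ℝ) :
    (t • (1 : Matrix V V ℝ) - A).det = ∏ i, (t - hA.eigenvalues i) := by
  set U : Matrix V V ℝ := (hA.eigenvectorUnitary : Matrix V V ℝ) with hU
  have h1 : U * star U = 1 := Matrix.mem_unitaryGroup_iff.mp hA.eigenvectorUnitary.2
  have key : t • (1 : Matrix V V ℝ) - A
      = U * (t • (1 : Matrix V V ℝ) - Matrix.diagonal (RCLike.ofReal ∘ hA.eigenvalues)) * star U := by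
    rw [Matrix.mul_sub, Matrix.sub_mul]
    conv_lhs => rw [hA.spectral_theorem]
    congr 1
    rw [Matrix.mul_smul, mul_one, Matrix.smul_mul, h1]
  rw [key, Matrix.det_mul, Matrix.det_mul, mul_comm (U.det), mul_assoc, ← Matrix.det_mul, h1,
    Matrix.det_one, mul_one]
  rw [Matrix.smul_one_eq_diagonal, Matrix.diagonal_sub, Matrix.det_diagonal]
  simp

lemma emx_roots_prod_sub {σ : Type*} [Fintype σ] (p : σ → ℝ) :
    (∏ i, (X - C (p i))).roots = Multiset.map p Finset.univ.val := by
  rw [Finset.prod_eq_multiset_prod]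
  have h2 : Multiset.map (fun i => X - C (p i)) Finset.univ.val
      = Multiset.map (fun a => X - C a) (Multiset.map p Finset.univ.val) := by
    rw [Multiset.map_map]; rfl
  rw [h2]
  exact Polynomial.roots_multiset_prod_X_sub_C _

lemma emx_multiset_eq_of_prod_eq {ι κ : Type*} [Fintype ι] [Fintype κ] (f : ι → ℝ) (g : κ → ℝ)
    (h : ∀ t : ℝ, ∏ i, (t - f i) = ∏ j, (t - g j)) :
    Multiset.map f Finset.univ.val = Multiset.map g Finset.univ.val := by
  have hpoly : (∏ i, (X - C (f i))) = ∏ j, (X - C (g j)) := by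
    apply Polynomial.funext; intro t
    simpa [eval_prod] using h t
  calc Multiset.map f Finset.univ.val = (∏ i, (X - C (f i))).roots := (emx_roots_prod_sub f).symm
  _ = (∏ j, (X - C (g j))).roots := by rw [hpoly]
  _ = Multiset.map g Finset.univ.val := emx_roots_prod_sub g

lemma emx_abs_le_max_of_between {a b c : ℝ} (h1 : a ≤ b) (h2 : b ≤ c) : |b| ≤ max |a| |c| := by
  rcases le_total 0 b with h | h
  · exact le_max_of_le_right (by rw [abs_of_nonneg h]; exact h2.trans (le_abs_self c))
  · exact le_max_of_le_left (by rw [abs_of_nonpos h]; exact (neg_le_neg h1).trans (neg_le_abs a))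

lemma emx_spectral_bound {V : Type*} [Fintype V] [DecidableEq V]
    (M : Matrix V V ℝ) (hM : M.IsHermitian)
    (lam : ℝ) (hlam0 : 0 ≤ lam) (g : EuclideanSpace ℝ V) (hg : g ≠ 0) (hMg : M *ᵥ g = g)
    (hev : ∀ i, hM.eigenvalues i = 1 ∨ |hM.eigenvalues i| ≤ lam)
    (huniq : lam < 1 → ∀ i i', hM.eigenvalues i = 1 → hM.eigenvalues i' = 1 → i = i')
    (u v : EuclideanSpace ℝ V) (hu : ∑ x, u x * g x = 0) (hv : ∑ x, v x * g x = 0) :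
    |∑ x, u x * (M *ᵥ v) x| ≤
      lam * (Real.sqrt (∑ x, u x * u x) * Real.sqrt (∑ x, v x * v x)) := by
  have hinner : ∀ a b : EuclideanSpace ℝ V, (inner ℝ a b : ℝ) = ∑ x, a x * b x := by
    intro a b; simp [PiLp.inner_apply, RCLike.inner_apply, mul_comm]
  set ν := hM.eigenvalues with hν
  set e := hM.eigenvectorBasis with he
  have hMT : Mᵀ = M := by
    ext i j
    simpa [Matrix.transpose_apply, Matrix.conjTranspose_apply] using congrFun (congrFun hM i) j
  have hswap : ∀ a b : V → ℝ, ∑ x, (M *ᵥ a) x * b x = ∑ x, a x * (M *ᵥ b) x := by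
    intro a b
    have h : (M *ᵥ a) ⬝ᵥ b = a ⬝ᵥ (M *ᵥ b) := by
      rw [Matrix.dotProduct_mulVec, ← Matrix.mulVec_transpose, hMT]
    exact h
  have hme : ∀ k, M *ᵥ (e k) = fun x => ν k * e k x := by
    intro k
    exact hM.mulVec_eigenvectorBasis k
  set A : V → ℝ := fun i => (inner ℝ (e i) u : ℝ) with hA
  set B : V → ℝ := fun i => (inner ℝ (e i) v : ℝ) with hB
  have hgk : ∀ k, ν k ≠ 1 → (inner ℝ (e k) g : ℝ) = 0 := by
    intro k hk
    have h1 := hswap (e k) g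
    rw [hMg, hme k] at h1
    have h2 : ν k * (∑ x, e k x * g x) = ∑ x, e k x * g x := by
      rw [Finset.mul_sum]
      simpa [mul_assoc] using h1
    have h3 : (ν k - 1) * (∑ x, e k x * g x) = 0 := by
      rw [sub_mul, one_mul, h2, sub_self]
    rw [hinner]
    rcases mul_eq_zero.mp h3 with h | h
    · exact absurd (by linarith [sub_eq_zero.mp h] : ν k = 1) (by exact hk)
    · exact h
  have hzero : ∀ i, lam < 1 → ν i = 1 → A i = 0 := by
    intro i hl hi
    have hgi : (inner ℝ (e i) g : ℝ) ≠ 0 := by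
      intro h0
      apply hg
      have hrep := e.sum_repr' g
      rw [← hrep]
      apply Finset.sum_eq_zero
      intro k _
      rcases eq_or_ne (ν k) 1 with hk | hk
      · rcases eq_or_ne k i with rfl | hki
        · rw [h0]; simp
        · exact absurd (huniq hl k i hk hi) hki
      · rw [hgk k hk]; simp
    have hsum := e.sum_inner_mul_inner g u
    have hgu : (inner ℝ g u : ℝ) = 0 := by
      rw [hinner, ← hu]
      exact Finset.sum_congr rfl fun x _ => mul_comm _ _
    have hsingle : ∑ k, (inner ℝ g (e k) : ℝ) * (inner ℝ (e k) u : ℝ)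
        = (inner ℝ g (e i) : ℝ) * (inner ℝ (e i) u : ℝ) := by
      apply Finset.sum_eq_single
      · intro k _ hki
        rcases eq_or_ne (ν k) 1 with hk | hk
        · exact absurd (huniq hl k i hk hi) hki
        · rw [real_inner_comm, hgk k hk, zero_mul]
      · intro h; exact absurd (Finset.mem_univ i) h
    have hz : (inner ℝ g (e i) : ℝ) * (inner ℝ (e i) u : ℝ) = 0 := by
      rw [← hsingle, hsum, hgu]
    rcases mul_eq_zero.mp hz with h | h
    · exact absurd (by rwa [real_inner_comm] at h) hgi
    · exact h
  have hexp : ∑ x, u x * (M *ᵥ v) x = ∑ i, A i * (ν i * B i) := by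
    have h1 : ∑ x, u x * (M *ᵥ v) x = (inner ℝ u (WithLp.toLp 2 (M *ᵥ v) : EuclideanSpace ℝ V) : ℝ) := by
      rw [hinner]
    rw [h1, ← e.sum_inner_mul_inner u (WithLp.toLp 2 (M *ᵥ v) : EuclideanSpace ℝ V)]
    apply Finset.sum_congr rfl
    intro i _
    have h2 : (inner ℝ (e i) (WithLp.toLp 2 (M *ᵥ v) : EuclideanSpace ℝ V) : ℝ) = ν i * B i := by
      rw [hinner]
      have h3 : ∑ x, e i x * (WithLp.toLp 2 (M *ᵥ v) : EuclideanSpace ℝ V) x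
          = ∑ x, (M *ᵥ (e i)) x * v x := (hswap (e i) v).symm
      rw [h3, hme i]
      have h4 : ∑ x, (fun x => ν i * e i x) x * v x = ν i * ∑ x, e i x * v x := by
        rw [Finset.mul_sum]
        exact Finset.sum_congr rfl fun x _ => by ring
      rw [h4]
      simp only [hB, hinner]
    rw [h2]
    simp only [hA]
    rw [real_inner_comm]
  have hPu : ∑ i, A i ^ 2 = ∑ x, u x * u x := by
    rw [← hinner u u, ← e.sum_inner_mul_inner u u]
    exact Finset.sum_congr rfl fun i _ => by rw [real_inner_comm (e i) u]; simp only [hA]; ring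
  have hPv : ∑ i, B i ^ 2 = ∑ x, v x * v x := by
    rw [← hinner v v, ← e.sum_inner_mul_inner v v]
    exact Finset.sum_congr rfl fun i _ => by rw [real_inner_comm (e i) v]; simp only [hB]; ring
  have hterm : ∀ i, |A i * (ν i * B i)| ≤ lam * (|A i| * |B i|) := by
    intro i
    rcases hev i with hi | hi
    · rcases lt_or_ge lam 1 with hl | hl
      · rw [hzero i hl hi]
        simp
      · rw [abs_mul, abs_mul, show |ν i| = 1 by rw [hi, abs_one], one_mul]
        calc |A i| * |B i| ≤ 1 * (|A i| * |B i|) := by rw [one_mul]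
        _ ≤ lam * (|A i| * |B i|) := mul_le_mul_of_nonneg_right hl (by positivity)
    · rw [abs_mul, abs_mul]
      calc |A i| * (|ν i| * |B i|) = |ν i| * (|A i| * |B i|) := by ring
      _ ≤ lam * (|A i| * |B i|) := mul_le_mul_of_nonneg_right hi (by positivity)
  calc |∑ x, u x * (M *ᵥ v) x| = |∑ i, A i * (ν i * B i)| := by rw [hexp]
  _ ≤ ∑ i, |A i * (ν i * B i)| := Finset.abs_sum_le_sum_abs _ _
  _ ≤ ∑ i, lam * (|A i| * |B i|) := Finset.sum_le_sum fun i _ => hterm i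
  _ = lam * ∑ i, |A i| * |B i| := by rw [Finset.mul_sum]
  _ ≤ lam * (Real.sqrt (∑ i, |A i| ^ 2) * Real.sqrt (∑ i, |B i| ^ 2)) :=
      mul_le_mul_of_nonneg_left (Real.sum_mul_le_sqrt_mul_sqrt _ _ _) hlam0
  _ = lam * (Real.sqrt (∑ x, u x * u x) * Real.sqrt (∑ x, v x * v x)) := by
      rw [← hPu, ← hPv]
      simp [sq_abs]

/-- expander mixing lemma for weighted graphs. -/
theorem stmt_3 {V : Type*} [Fintype V] [DecidableEq V]
    (w : V → V → ℝ)
    (hsymm : ∀ u v, w u v = w v u)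
    (hnonneg : ∀ u v, 0 ≤ w u v)
    (hloop : ∀ v, w v v = 0)
    (hdegpos : ∀ x, 0 < wdeg w x)
    (n : ℕ) (hn : Fintype.card V = n) (hn2 : 2 ≤ n)
    (μ : Fin n → ℝ) (hμ : IsEigenSeq (wLap w) μ)
    (X Y : Finset V) :
    |(∑ x ∈ X, ∑ y ∈ Y, w x y) - wvol w X * wvol w Y / wvol w Finset.univ| ≤
      (max |1 - μ ⟨1, by omega⟩| |1 - μ ⟨n - 1, by omega⟩|) *
        Real.sqrt (wvol w X * wvol w Y * wvol w Xᶜ * wvol w Yᶜ) / wvol w Finset.univ := by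
  classical
  have hVne : Nonempty V := Fintype.card_pos_iff.mp (by omega)
  set s : V → ℝ := fun x => Real.sqrt (wdeg w x) with hsdef
  have hspos : ∀ x, 0 < s x := fun x => Real.sqrt_pos.2 (hdegpos x)
  have hs2 : ∀ x, s x * s x = wdeg w x := fun x => Real.mul_self_sqrt (hdegpos x).le
  set M : Matrix V V ℝ := invSqrtT w * Matrix.of w * invSqrtT w with hMdef
  have hMapp : ∀ x y, M x y = (s x)⁻¹ * (w x y * (s y)⁻¹) := by
    intro x y
    simp [hMdef, invSqrtT, Matrix.mul_diagonal, Matrix.diagonal_mul, mul_assoc, hsdef]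
  have hM : M.IsHermitian := by
    rw [Matrix.IsHermitian]
    ext x y
    rw [Matrix.conjTranspose_apply, hMapp, hMapp, hsymm x y]
    simp; ring
  have hLM : wLap w = 1 - M := rfl
  set vG := wvol w Finset.univ with hvGdef
  have hvolnn : ∀ Z : Finset V, 0 ≤ wvol w Z :=
    fun Z => Finset.sum_nonneg fun x _ => (hdegpos x).le
  have hvGpos : 0 < vG := Finset.sum_pos (fun x _ => hdegpos x) Finset.univ_nonempty
  have hMs : M *ᵥ s = s := by
    funext x
    have h0 : (M *ᵥ s) x = ∑ y, M x y * s y := rfl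
    have h1 : ∀ y, M x y * s y = (s x)⁻¹ * w x y := by
      intro y
      rw [hMapp, mul_assoc ((s x)⁻¹), mul_assoc (w x y),
        inv_mul_cancel₀ (ne_of_gt (hspos y)), mul_one]
    rw [h0, Finset.sum_congr rfl fun y _ => h1 y, ← Finset.mul_sum]
    have h2 : ∑ y, w x y = wdeg w x := rfl
    rw [h2, ← hs2 x, ← mul_assoc, inv_mul_cancel₀ (ne_of_gt (hspos x)), one_mul]
  have hsne : s ≠ 0 := by
    intro h
    exact absurd (congrFun h (Classical.arbitrary V)) (ne_of_gt (hspos _))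
  -- quadratic form bound : PSD of the Laplacian
  have hform : ∀ v : V → ℝ, ∑ x, v x * (M *ᵥ v) x ≤ ∑ x, v x * v x := by
    intro v
    set f : V → ℝ := fun x => v x * (s x)⁻¹ with hf
    have expand : ∑ x, v x * (M *ᵥ v) x = ∑ x, ∑ y, w x y * (f x * f y) := by
      apply Finset.sum_congr rfl
      intro x _
      have h0 : (M *ᵥ v) x = ∑ y, M x y * v y := rfl
      rw [h0, Finset.mul_sum]
      exact Finset.sum_congr rfl fun y _ => by rw [hMapp]; simp [hf]; ring
    have hA : ∑ x, ∑ y, w x y * (f x * f x) = ∑ x, v x * v x := by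
      apply Finset.sum_congr rfl
      intro x _
      rw [← Finset.sum_mul]
      have h2 : ∑ y, w x y = wdeg w x := rfl
      rw [h2, ← hs2 x, hf]
      field_simp [ne_of_gt (hspos x)]
    have hB : ∑ x, ∑ y, w x y * (f y * f y) = ∑ x, v x * v x := by
      rw [Finset.sum_comm, ← hA]
      exact Finset.sum_congr rfl fun x _ => Finset.sum_congr rfl fun y _ => by
        rw [hsymm x y]
    have hle : (2:ℝ) * ∑ x, ∑ y, w x y * (f x * f y)
        ≤ (∑ x, ∑ y, w x y * (f x * f x)) + (∑ x, ∑ y, w x y * (f y * f y)) := by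
      rw [Finset.mul_sum, ← Finset.sum_add_distrib]
      apply Finset.sum_le_sum; intro x _
      rw [Finset.mul_sum, ← Finset.sum_add_distrib]
      apply Finset.sum_le_sum; intro y _
      nlinarith [mul_nonneg (hnonneg x y) (sq_nonneg (f x - f y))]
    linarith [hle, hA, hB, expand]
  -- characteristic polynomial evaluations
  have hch : ∀ t : ℝ, (wLap w).charpoly.eval t = ∏ j, (t - μ j) := by
    intro t
    rw [hμ.2, eval_prod]
    simp
  have hroot : ∀ (t : ℝ) (v : V → ℝ), v ≠ 0 → M *ᵥ v = t • v → ∃ j, μ j = 1 - t := by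
    intro t v hv0 hMv
    have hLv : ((1 - t) • (1 : Matrix V V ℝ) - wLap w) *ᵥ v = 0 := by
      rw [Matrix.sub_mulVec, Matrix.smul_mulVec, Matrix.one_mulVec, hLM,
        Matrix.sub_mulVec, Matrix.one_mulVec, hMv]
      funext x
      simp [Pi.smul_apply, smul_eq_mul]
      ring
    have hdet : ((1 - t) • (1 : Matrix V V ℝ) - wLap w).det = 0 :=
      Matrix.exists_mulVec_eq_zero_iff.mp ⟨v, hv0, hLv⟩
    have h5 := hch (1 - t)
    rw [emx_eval_charpoly, hdet] at h5
    obtain ⟨j, _, hj⟩ := Finset.prod_eq_zero_iff.mp h5.symm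
    exact ⟨j, by linarith [sub_eq_zero.mp hj]⟩
  have hroot' : ∀ j : Fin n, ∃ v : V → ℝ, v ≠ 0 ∧ M *ᵥ v = (1 - μ j) • v := by
    intro j
    have hdet : ((μ j) • (1 : Matrix V V ℝ) - wLap w).det = 0 := by
      rw [← emx_eval_charpoly, hch]
      exact Finset.prod_eq_zero (Finset.mem_univ j) (sub_self _)
    obtain ⟨v, hv0, hv⟩ := Matrix.exists_mulVec_eq_zero_iff.mpr hdet
    refine ⟨v, hv0, ?_⟩
    rw [Matrix.sub_mulVec, Matrix.smul_mulVec, Matrix.one_mulVec, hLM,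
      Matrix.sub_mulVec, Matrix.one_mulVec] at hv
    funext x
    have h6 := congrFun hv x
    simp only [Pi.sub_apply, Pi.smul_apply, smul_eq_mul, Pi.zero_apply] at h6 ⊢
    linarith
  have hμnn : ∀ j, 0 ≤ μ j := by
    intro j
    obtain ⟨v, hv0, hv⟩ := hroot' j
    have h1 : ∑ x, v x * (M *ᵥ v) x = (1 - μ j) * ∑ x, v x * v x := by
      rw [hv, Finset.mul_sum]
      exact Finset.sum_congr rfl fun x _ => by
        simp [Pi.smul_apply, smul_eq_mul]; ring
    have h2 := hform v
    have h3 : 0 < ∑ x, v x * v x := by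
      have hex : ∃ x, v x ≠ 0 := by
        by_contra h
        push_neg at h
        exact hv0 (funext h)
      obtain ⟨x0, hx0⟩ := hex
      exact Finset.sum_pos' (fun x _ => mul_self_nonneg _)
        ⟨x0, Finset.mem_univ x0, mul_self_pos.mpr hx0⟩
    nlinarith
  have hex0 : ∃ j, μ j = 0 := by
    obtain ⟨j, hj⟩ := hroot 1 s hsne (by rw [hMs, one_smul])
    exact ⟨j, by simpa using hj⟩
  have h0n : 0 < n := by omega
  have hμ0 : μ ⟨0, h0n⟩ = 0 := by
    obtain ⟨j0, hj0⟩ := hex0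
    refine le_antisymm ?_ (hμnn _)
    calc μ ⟨0, h0n⟩ ≤ μ j0 := hμ.1 (by rw [Fin.le_def]; exact Nat.zero_le _)
    _ = 0 := hj0
  have hidx : ∀ j : Fin n, μ j ≠ 0 → 1 ≤ j.val := by
    intro j hj
    by_contra h
    push_neg at h
    have hj0 : j = ⟨0, h0n⟩ := Fin.ext (by simp; omega)
    exact hj (hj0 ▸ hμ0)
  set lam := max |1 - μ ⟨1, by omega⟩| |1 - μ ⟨n - 1, by omega⟩| with hlamdef
  have hlam0 : 0 ≤ lam := le_trans (abs_nonneg _) (le_max_left _ _)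
  set ν := hM.eigenvalues with hν
  -- multiset of eigenvalues
  have hms : Multiset.map ν Finset.univ.val
      = Multiset.map (fun j : Fin n => 1 - μ j) Finset.univ.val := by
    apply emx_multiset_eq_of_prod_eq
    intro t
    have hneg : t • (1 : Matrix V V ℝ) - M = -((1 - t) • (1 : Matrix V V ℝ) - wLap w) := by
      rw [hLM, sub_smul, one_smul]
      abel
    calc ∏ i, (t - ν i) = (t • (1 : Matrix V V ℝ) - M).det := (emx_det_prod M hM t).symm
    _ = (-1 : ℝ) ^ Fintype.card V * ((1 - t) • (1 : Matrix V V ℝ) - wLap w).det := by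
        rw [hneg, Matrix.det_neg]
    _ = (-1 : ℝ) ^ n * ∏ j, ((1 - t) - μ j) := by
        rw [← emx_eval_charpoly, hch, hn]
    _ = ∏ j, (t - (1 - μ j)) := by
        have h7 : ∀ j : Fin n, t - (1 - μ j) = (-1 : ℝ) * ((1 - t) - μ j) := fun j => by ring
        rw [Finset.prod_congr rfl fun j _ => h7 j, Finset.prod_mul_distrib,
          Finset.prod_const, Finset.card_univ, Fintype.card_fin]
  have hev : ∀ i, ν i = 1 ∨ |ν i| ≤ lam := by
    intro i
    have hmem : ν i ∈ Multiset.map (fun j : Fin n => 1 - μ j) Finset.univ.val := by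
      rw [← hms]
      exact Multiset.mem_map_of_mem _ (Finset.mem_val.mpr (Finset.mem_univ i))
    obtain ⟨j, _, hj⟩ := Multiset.mem_map.mp hmem
    rcases eq_or_ne (μ j) 0 with h0 | h0
    · left; rw [← hj, h0, sub_zero]
    · right
      have h1 : μ ⟨1, by omega⟩ ≤ μ j := hμ.1 (by rw [Fin.le_def]; exact hidx j h0)
      have h2 : μ j ≤ μ ⟨n - 1, by omega⟩ := hμ.1 (by rw [Fin.le_def]; simp; omega)
      rw [← hj, hlamdef, max_comm]
      exact emx_abs_le_max_of_between (by linarith) (by linarith)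
  have huniq : lam < 1 → ∀ i i', ν i = 1 → ν i' = 1 → i = i' := by
    intro hl i i' hi hi'
    by_contra hne
    have hμ1pos : 0 < μ ⟨1, by omega⟩ := by
      have h8 : |1 - μ ⟨1, by omega⟩| ≤ lam := le_max_left _ _
      have h9 := abs_le.mp h8
      nlinarith
    have hc1 : 1 < Multiset.count (1 : ℝ) (Multiset.map ν Finset.univ.val) := by
      rw [Multiset.count_map, ← Finset.filter_val]
      exact Finset.one_lt_card.mpr
        ⟨i, by simp [hi.symm], i', by simp [hi'.symm], hne⟩
    have hc2 : Multiset.count (1 : ℝ) (Multiset.map (fun j : Fin n => 1 - μ j) Finset.univ.val) ≤ 1 := by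
      rw [Multiset.count_map, ← Finset.filter_val]
      have hsub : (Finset.univ.filter (fun j : Fin n => (1 : ℝ) = 1 - μ j)) ⊆ {⟨0, h0n⟩} := by
        intro j hj
        simp only [Finset.mem_filter] at hj
        have hj0 : μ j = 0 := by linarith [hj.2]
        have : 1 ≤ j.val → False := by
          intro h1j
          have := hμ.1 (show (⟨1, by omega⟩ : Fin n) ≤ j by rw [Fin.le_def]; exact h1j)
          nlinarith
        simp only [Finset.mem_singleton]
        have hv0 : j.val = 0 := by
          by_contra hvv
          exact this (by omega)
        exact Fin.ext (by simp [hv0])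
      calc (Finset.univ.filter (fun j : Fin n => (1 : ℝ) = 1 - μ j)).card
          ≤ ({⟨0, h0n⟩} : Finset (Fin n)).card := Finset.card_le_card hsub
      _ = 1 := Finset.card_singleton _
    rw [hms] at hc1
    omega
  -- the orthogonal parts
  set uX : V → ℝ := fun x => (if x ∈ X then s x else 0) - (wvol w X / vG) * s x with huXdef
  set uY : V → ℝ := fun x => (if x ∈ Y then s x else 0) - (wvol w Y / vG) * s x with huYdef
  have hpsig : ∀ Z : Finset V, ∑ x, (if x ∈ Z then s x else 0) * s x = wvol w Z := by
    intro Z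
    have h1 : ∀ x, (if x ∈ Z then s x else 0) * s x = if x ∈ Z then wdeg w x else 0 := by
      intro x
      by_cases hx : x ∈ Z <;> simp [hx, hs2 x]
    rw [Finset.sum_congr rfl fun x _ => h1 x, Finset.sum_ite_mem, Finset.univ_inter]
    rfl
  have hgg : ∑ x, s x * s x = vG := by
    rw [Finset.sum_congr rfl fun x _ => hs2 x]
    rfl
  have hug : ∀ Z : Finset V,
      ∑ x, ((if x ∈ Z then s x else 0) - (wvol w Z / vG) * s x) * s x = 0 := by
    intro Z
    have h1 : ∀ x, ((if x ∈ Z then s x else 0) - (wvol w Z / vG) * s x) * s x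
        = (if x ∈ Z then s x else 0) * s x - (wvol w Z / vG) * (s x * s x) := by
      intro x; ring
    rw [Finset.sum_congr rfl fun x _ => h1 x, Finset.sum_sub_distrib, hpsig Z,
      ← Finset.mul_sum, hgg]
    field_simp
    ring
  have hXg : ∑ x, uX x * s x = 0 := hug X
  have hYg : ∑ x, uY x * s x = 0 := hug Y
  have hcompl : ∀ Z : Finset V, wvol w Z + wvol w Zᶜ = vG := by
    intro Z
    exact Z.sum_add_sum_compl (wdeg w)
  have hnorm : ∀ Z : Finset V,
      ∑ x, ((if x ∈ Z then s x else 0) - (wvol w Z / vG) * s x)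
        * ((if x ∈ Z then s x else 0) - (wvol w Z / vG) * s x)
      = wvol w Z * wvol w Zᶜ / vG := by
    intro Z
    have h1 : ∀ x, ((if x ∈ Z then s x else 0) - (wvol w Z / vG) * s x)
        * ((if x ∈ Z then s x else 0) - (wvol w Z / vG) * s x)
        = (if x ∈ Z then s x else 0) * s x
          - (wvol w Z / vG) * ((if x ∈ Z then s x else 0) * s x)
          - (wvol w Z / vG) * ((if x ∈ Z then s x else 0) * s x)
          + (wvol w Z / vG) * (wvol w Z / vG) * (s x * s x) := by
      intro x
      by_cases hx : x ∈ Z <;> simp [hx] <;> ring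
    rw [Finset.sum_congr rfl fun x _ => h1 x]
    rw [Finset.sum_add_distrib, Finset.sum_sub_distrib, Finset.sum_sub_distrib]
    simp only [← Finset.mul_sum]
    rw [hpsig Z, hgg]
    have h2 : wvol w Zᶜ = vG - wvol w Z := by linarith [hcompl Z]
    rw [h2]
    field_simp
    ring
  -- the main identity
  have hMψY : ∀ x, (M *ᵥ (fun y => if y ∈ Y then s y else 0)) x
      = (s x)⁻¹ * ∑ y ∈ Y, w x y := by
    intro x
    have h0 : (M *ᵥ (fun y => if y ∈ Y then s y else 0)) x
        = ∑ y, M x y * (if y ∈ Y then s y else 0) := rfl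
    have h1 : ∀ y, M x y * (if y ∈ Y then s y else 0)
        = if y ∈ Y then (s x)⁻¹ * w x y else 0 := by
      intro y
      by_cases hy : y ∈ Y <;> simp [hy, hMapp]
      rw [mul_assoc ((s x)⁻¹), mul_assoc (w x y), inv_mul_cancel₀ (ne_of_gt (hspos y)), mul_one]
    rw [h0, Finset.sum_congr rfl fun y _ => h1 y, Finset.sum_ite_mem, Finset.univ_inter,
      Finset.mul_sum]
  have hMuY : M *ᵥ uY = fun x => (M *ᵥ (fun y => if y ∈ Y then s y else 0)) x
      - (wvol w Y / vG) * s x := by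
    have h1 : uY = (fun y => if y ∈ Y then s y else 0) - (wvol w Y / vG) • s := rfl
    rw [h1, Matrix.mulVec_sub, Matrix.mulVec_smul, hMs]
    rfl
  have hsMψY : ∑ x, s x * ((s x)⁻¹ * ∑ y ∈ Y, w x y) = wvol w Y := by
    have h1 : ∀ x, s x * ((s x)⁻¹ * ∑ y ∈ Y, w x y) = ∑ y ∈ Y, w x y := by
      intro x
      rw [← mul_assoc, mul_inv_cancel₀ (ne_of_gt (hspos x)), one_mul]
    rw [Finset.sum_congr rfl fun x _ => h1 x, Finset.sum_comm]
    apply Finset.sum_congr rfl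
    intro y _
    calc ∑ x, w x y = ∑ x, w y x := Finset.sum_congr rfl fun x _ => hsymm x y
    _ = wdeg w y := rfl
  have hψMψ : ∑ x, (if x ∈ X then s x else 0) * ((s x)⁻¹ * ∑ y ∈ Y, w x y)
      = ∑ x ∈ X, ∑ y ∈ Y, w x y := by
    have h1 : ∀ x, (if x ∈ X then s x else 0) * ((s x)⁻¹ * ∑ y ∈ Y, w x y)
        = if x ∈ X then ∑ y ∈ Y, w x y else 0 := by
      intro x
      by_cases hx : x ∈ X <;> simp [hx]
      rw [← mul_assoc, mul_inv_cancel₀ (ne_of_gt (hspos x)), one_mul]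
    rw [Finset.sum_congr rfl fun x _ => h1 x, Finset.sum_ite_mem, Finset.univ_inter]
  have hmain : ∑ x, uX x * (M *ᵥ uY) x
      = (∑ x ∈ X, ∑ y ∈ Y, w x y) - wvol w X * wvol w Y / vG := by
    have h1 : ∀ x, uX x * (M *ᵥ uY) x
        = (if x ∈ X then s x else 0) * ((s x)⁻¹ * ∑ y ∈ Y, w x y)
          - (wvol w X / vG) * (s x * ((s x)⁻¹ * ∑ y ∈ Y, w x y))
          - (wvol w Y / vG) * (uX x * s x) := by
      intro x
      rw [hMuY]
      simp only [huXdef]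
      rw [hMψY x]
      ring
    rw [Finset.sum_congr rfl fun x _ => h1 x, Finset.sum_sub_distrib, Finset.sum_sub_distrib,
      ← Finset.mul_sum, ← Finset.mul_sum, hψMψ, hsMψY, hXg, mul_zero, sub_zero]
    ring
  -- apply the spectral bound
  have hg0 : (WithLp.toLp 2 s : EuclideanSpace ℝ V) ≠ 0 := by
    intro h
    exact hsne (congrArg WithLp.ofLp h)
  have hbound := emx_spectral_bound M hM lam hlam0 (WithLp.toLp 2 s : EuclideanSpace ℝ V) hg0 hMs hev huniq
    (WithLp.toLp 2 uX : EuclideanSpace ℝ V) (WithLp.toLp 2 uY : EuclideanSpace ℝ V) hXg hYg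
  simp only [WithLp.ofLp_toLp] at hbound
  rw [hmain] at hbound
  have hnX := hnorm X
  have hnY := hnorm Y
  have hsqrt : Real.sqrt (wvol w X * wvol w Xᶜ / vG) * Real.sqrt (wvol w Y * wvol w Yᶜ / vG)
      = Real.sqrt (wvol w X * wvol w Y * wvol w Xᶜ * wvol w Yᶜ) / vG := by
    rw [← Real.sqrt_mul (by
      apply div_nonneg (mul_nonneg (hvolnn X) (hvolnn Xᶜ)) hvGpos.le)]
    have h1 : wvol w X * wvol w Xᶜ / vG * (wvol w Y * wvol w Yᶜ / vG)
        = wvol w X * wvol w Y * wvol w Xᶜ * wvol w Yᶜ / (vG * vG) := by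
      field_simp
    rw [h1, Real.sqrt_div' _ (mul_nonneg hvGpos.le hvGpos.le),
      Real.sqrt_mul_self hvGpos.le]
  have hnX' : ∑ x, uX x * uX x = wvol w X * wvol w Xᶜ / vG := hnX
  have hnY' : ∑ x, uY x * uY x = wvol w Y * wvol w Yᶜ / vG := hnY
  calc |(∑ x ∈ X, ∑ y ∈ Y, w x y) - wvol w X * wvol w Y / vG|
      ≤ lam * (Real.sqrt (wvol w X * wvol w Xᶜ / vG) * Real.sqrt (wvol w Y * wvol w Yᶜ / vG)) := by
        rw [← hnX', ← hnY']
        exact hbound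
  _ = lam * Real.sqrt (wvol w X * wvol w Y * wvol w Xᶜ * wvol w Yᶜ) / vG := by
        rw [hsqrt]
        ring
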